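/- (Corollary of the S-arithmetic Dirichlet theorem) For each finite place p ∈ S_f there is a constant C_p ≥ 1 (and C_∞ = 1) such that for every A = (A_p)_{p∈S} ∈ Mat_{m,n}(ℚ_S) there are infinitely many pairs (p⃗, q⃗) ∈ ℤ_S^m × ℤ_S^n satisfying, for all p ∈ S, ‖A_p q⃗ + p⃗‖_p^m ≤ C_p · min{1, ‖q⃗‖_p^{-n}}. -/

import Mathlib

open MeasureTheory Matrix

noncomputable section

/-- `z` belongs to the ring of `S`-integers `ℤ_S = ℤ[1/P]`,
where `P` is the product of the finite primes in `S`. -/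
def IsZS (P : ℕ) (z : ℚ) : Prop := ∃ (a : ℤ) (k : ℕ), z = (a : ℚ) / (P : ℚ) ^ k

/-- A collection of approximating functions `ψ = (ψ_p)_{p ∈ S}`:
each `ψ_p : ℝ_{>0} → ℝ_{>0}` is non-increasing and `≡ 1` on `(0,1]`
(we extend by `1` on `t ≤ 1`); moreover for each finite place `p`,
`ψ_p` is constant on `{p^{kn}, …, p^{kn+n-1}}` for every `k ∈ ℤ` and
takes values in `p^{mℤ}` on `p^ℤ`. -/
structure ApproxFamily (m n s : ℕ) (p : Fin s → ℕ) : Type where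
  psiR : ℝ → ℝ
  psiP : Fin s → ℝ → ℝ
  posR : ∀ t, 0 < psiR t
  antiR : ∀ ⦃t₁ t₂ : ℝ⦄, 0 < t₁ → t₁ ≤ t₂ → psiR t₂ ≤ psiR t₁
  oneR : ∀ ⦃t : ℝ⦄, t ≤ 1 → psiR t = 1
  posP : ∀ i t, 0 < psiP i t
  antiP : ∀ i ⦃t₁ t₂ : ℝ⦄, 0 < t₁ → t₁ ≤ t₂ → psiP i t₂ ≤ psiP i t₁
  oneP : ∀ i ⦃t : ℝ⦄, t ≤ 1 → psiP i t = 1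
  constP : ∀ i (k : ℤ) (j : ℕ), j < n →
    psiP i ((p i : ℝ) ^ (k * n + j : ℤ)) = psiP i ((p i : ℝ) ^ (k * n : ℤ))
  valsP : ∀ i (k : ℤ), ∃ l : ℤ, psiP i ((p i : ℝ) ^ k) = (p i : ℝ) ^ (m * l : ℤ)

/-- The real components of the diagonal embedding of a rational vector. -/
def ratR {k : ℕ} (q : Fin k → ℚ) : Fin k → ℝ := fun j => (q j : ℝ)

/-- The `p i`-adic components of the diagonal embedding of a rational vector. -/
def ratP {s : ℕ} (p : Fin s → ℕ) [∀ i, Fact (p i).Prime] {k : ℕ} (i : Fin s)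
    (q : Fin k → ℚ) : Fin k → ℚ_[p i] := fun j => (q j : ℚ_[p i])

/-- The region `E_f(T) ⊆ ℚ_S^m × ℚ_S^n` cut out by `‖x‖_p^m ≤ f_p(‖y‖_p^n)` and
`‖y‖_p^n ≤ T_p` for all `p ∈ S` (product coordinates). -/
def Eprod (m n : ℕ) {s : ℕ} (p : Fin s → ℕ) [∀ i, Fact (p i).Prime]
    (fR : ℝ → ℝ) (fP : Fin s → ℝ → ℝ) (TR : ℝ) (TP : Fin s → ℝ) :
    Set (((Fin m → ℝ) × ∀ i, Fin m → ℚ_[p i]) × ((Fin n → ℝ) × ∀ i, Fin n → ℚ_[p i])) :=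
  {xy | ‖xy.1.1‖ ^ m ≤ fR (‖xy.2.1‖ ^ n) ∧ ‖xy.2.1‖ ^ n ≤ TR ∧
      ∀ i, ‖xy.1.2 i‖ ^ m ≤ fP i (‖xy.2.2 i‖ ^ n) ∧ ‖xy.2.2 i‖ ^ n ≤ TP i}

/-- The region `E_f(T) ⊆ ℚ_S^{m+n}`, where the first `m` coordinates play the role of
`x` and the last `n` coordinates the role of `y`. -/
def Efull (m n : ℕ) {s : ℕ} (p : Fin s → ℕ) [∀ i, Fact (p i).Prime]
    (fR : ℝ → ℝ) (fP : Fin s → ℝ → ℝ) (TR : ℝ) (TP : Fin s → ℝ) :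
    Set ((Fin (m + n) → ℝ) × ∀ i, Fin (m + n) → ℚ_[p i]) :=
  {v | ‖fun a : Fin m => v.1 (Fin.castAdd n a)‖ ^ m
        ≤ fR (‖fun b : Fin n => v.1 (Fin.natAdd m b)‖ ^ n) ∧
      ‖fun b : Fin n => v.1 (Fin.natAdd m b)‖ ^ n ≤ TR ∧
      ∀ i, ‖fun a : Fin m => v.2 i (Fin.castAdd n a)‖ ^ m
            ≤ fP i (‖fun b : Fin n => v.2 i (Fin.natAdd m b)‖ ^ n) ∧
          ‖fun b : Fin n => v.2 i (Fin.natAdd m b)‖ ^ n ≤ TP i}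

/-- The operator norm of a real matrix acting on sup-normed spaces. -/
def opNorm {k l : ℕ} (M : Matrix (Fin k) (Fin l) ℝ) : ℝ :=
  ‖LinearMap.toContinuousLinearMap M.mulVecLin‖

/-- An element of the group `𝐇 = ∏_{p ∈ S} H_p` of block lower-triangular matrices,
given by its blocks at each place. -/
structure HElem (m n : ℕ) (s : ℕ) (p : Fin s → ℕ) [∀ i, Fact (p i).Prime] : Type where
  aR : Matrix (Fin m) (Fin m) ℝ
  bR : Matrix (Fin n) (Fin m) ℝ
  cR : Matrix (Fin n) (Fin n) ℝ
  aP : ∀ i, Matrix (Fin m) (Fin m) ℚ_[p i]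
  bP : ∀ i, Matrix (Fin n) (Fin m) ℚ_[p i]
  cP : ∀ i, Matrix (Fin n) (Fin n) ℚ_[p i]

/-- The action of an element of `𝐇` on `ℚ_S^m × ℚ_S^n`:
`h·(x, y) = (α x, β x + γ y)` at each place. -/
def HElem.act {m n s : ℕ} {p : Fin s → ℕ} [∀ i, Fact (p i).Prime] (h : HElem m n s p)
    (xy : ((Fin m → ℝ) × ∀ i, Fin m → ℚ_[p i]) × ((Fin n → ℝ) × ∀ i, Fin n → ℚ_[p i])) :
    ((Fin m → ℝ) × ∀ i, Fin m → ℚ_[p i]) × ((Fin n → ℝ) × ∀ i, Fin n → ℚ_[p i]) :=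
  ((h.aR.mulVec xy.1.1, fun i => (h.aP i).mulVec (xy.1.2 i)),
   (h.bR.mulVec xy.1.1 + h.cR.mulVec xy.2.1,
    fun i => (h.bP i).mulVec (xy.1.2 i) + (h.cP i).mulVec (xy.2.2 i)))

/-- Membership in `H̃_{∞,ε}`: operator norm bounds on the blocks. -/
def inHtilde (m n : ℕ) (ε : ℝ) (α : Matrix (Fin m) (Fin m) ℝ) (β : Matrix (Fin n) (Fin m) ℝ)
    (γ : Matrix (Fin n) (Fin n) ℝ) : Prop :=
  opNorm α ^ m ≤ 1 + ε ∧ opNorm γ ^ n ≤ 1 + ε / 2 ∧ opNorm β ≤ ε / (4 * n)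

/-- `h ∈ (H̃_{∞,ε} ∩ H̃_{∞,ε}⁻¹) × ∏_{p ∈ S_f} H_p(ℤ_p)`. -/
def HElem.isAdmissible {m n s : ℕ} {p : Fin s → ℕ} [∀ i, Fact (p i).Prime]
    (h : HElem m n s p) (ε : ℝ) : Prop :=
  IsUnit h.aR.det ∧ IsUnit h.cR.det ∧
  inHtilde m n ε h.aR h.bR h.cR ∧
  inHtilde m n ε h.aR⁻¹ (-(h.cR⁻¹ * h.bR * h.aR⁻¹)) h.cR⁻¹ ∧
  ∀ i, ((∀ a b, ‖h.aP i a b‖ ≤ 1) ∧ ‖(h.aP i).det‖ = 1) ∧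
      ((∀ a b, ‖h.cP i a b‖ ≤ 1) ∧ ‖(h.cP i).det‖ = 1) ∧
      (∀ a b, ‖h.bP i a b‖ ≤ 1)

end

section Helpers
open IsUltrametricDist

lemma isZS_int (P : ℕ) (a : ℤ) : IsZS P a := ⟨a, 0, by simp⟩

lemma isZS_add {P : ℕ} (hP : (P : ℚ) ≠ 0) {x y : ℚ} (hx : IsZS P x) (hy : IsZS P y) :
    IsZS P (x + y) := by
  obtain ⟨a, k, rfl⟩ := hx
  obtain ⟨b, l, rfl⟩ := hy
  refine ⟨a * P ^ l + b * P ^ k, k + l, ?_⟩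
  have h1 : (P : ℚ) ^ k ≠ 0 := pow_ne_zero _ hP
  have h2 : (P : ℚ) ^ l ≠ 0 := pow_ne_zero _ hP
  rw [div_add_div _ _ h1 h2, pow_add]
  congr 1
  push_cast
  ring

lemma isZS_neg {P : ℕ} {x : ℚ} (hx : IsZS P x) : IsZS P (-x) := by
  obtain ⟨a, k, rfl⟩ := hx
  exact ⟨-a, k, by push_cast; ring⟩

lemma isZS_sub {P : ℕ} (hP : (P : ℚ) ≠ 0) {x y : ℚ} (hx : IsZS P x) (hy : IsZS P y) :
    IsZS P (x - y) := by
  rw [sub_eq_add_neg]; exact isZS_add hP hx (isZS_neg hy)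

lemma isZS_mul {P : ℕ} {x y : ℚ} (hx : IsZS P x) (hy : IsZS P y) : IsZS P (x * y) := by
  obtain ⟨a, k, rfl⟩ := hx
  obtain ⟨b, l, rfl⟩ := hy
  exact ⟨a * b, k + l, by push_cast; rw [pow_add]; ring⟩

lemma isZS_sum {P : ℕ} (hP : (P : ℚ) ≠ 0) {ι : Type*} (t : Finset ι) (f : ι → ℚ)
    (h : ∀ i ∈ t, IsZS P (f i)) : IsZS P (∑ i ∈ t, f i) := by
  classical
  induction t using Finset.induction_on with
  | empty => simpa using isZS_int P 0
  | insert _ _ hnt ih =>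
    rw [Finset.sum_insert hnt]
    exact isZS_add hP (h _ (Finset.mem_insert_self _ _))
      (ih fun i hi => h i (Finset.mem_insert_of_mem hi))

lemma padic_approx (p : ℕ) [hp : Fact p.Prime] (x : ℚ_[p]) :
    ∃ (a : ℤ) (k : ℕ), ‖x - (((a : ℚ) / (p : ℚ) ^ k : ℚ) : ℚ_[p])‖ ≤ 1 := by
  have hp1 : (1 : ℝ) < p := by exact_mod_cast hp.out.one_lt
  obtain ⟨k, hk⟩ := pow_unbounded_of_one_lt ‖x‖ hp1
  have hpk : ‖x * (p : ℚ_[p]) ^ k‖ ≤ 1 := by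
    rw [norm_mul, norm_pow, Padic.norm_p]
    calc ‖x‖ * ((p : ℝ)⁻¹) ^ k ≤ (p : ℝ) ^ k * ((p : ℝ)⁻¹) ^ k :=
          mul_le_mul_of_nonneg_right hk.le (by positivity)
      _ = 1 := by rw [← mul_pow, mul_inv_cancel₀ (by positivity), one_pow]
  set z : ℤ_[p] := ⟨x * (p : ℚ_[p]) ^ k, hpk⟩ with hz
  refine ⟨z.appr k, k, ?_⟩
  have hspec : ‖z - (z.appr k : ℤ_[p])‖ ≤ (p : ℝ) ^ (-(k : ℤ)) :=
    (PadicInt.norm_le_pow_iff_mem_span_pow _ k).2 (z.appr_spec k)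
  have hcast : ‖(x * (p : ℚ_[p]) ^ k - (z.appr k : ℚ_[p]))‖ ≤ (p : ℝ) ^ (-(k : ℤ)) := by
    have : ((z - (z.appr k : ℤ_[p]) : ℤ_[p]) : ℚ_[p]) = x * (p : ℚ_[p]) ^ k - (z.appr k : ℚ_[p]) := by
      rfl
    rw [← this]
    simpa [PadicInt.norm_def] using hspec
  have hppos : (0 : ℝ) < (p : ℝ) := by positivity
  have hkey : x - (((z.appr k : ℤ) : ℚ) / (p : ℚ) ^ k : ℚ) =
      (x * (p : ℚ_[p]) ^ k - (z.appr k : ℚ_[p])) / (p : ℚ_[p]) ^ k := by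
    have hpow : ((p : ℚ_[p]) ^ k) ≠ 0 := pow_ne_zero _ (by exact_mod_cast hp.out.ne_zero)
    push_cast
    field_simp
  rw [hkey, norm_div, norm_pow, Padic.norm_p]
  calc ‖x * (p : ℚ_[p]) ^ k - (z.appr k : ℚ_[p])‖ / (p : ℝ)⁻¹ ^ k
      ≤ (p : ℝ) ^ (-(k : ℤ)) / (p : ℝ)⁻¹ ^ k := by
        gcongr
    _ = 1 := by
        rw [inv_pow, _root_.zpow_neg, zpow_natCast, div_self (by positivity)]
open IsUltrametricDist

-- norm of p'-power denominators at p
lemma norm_prime_pow_eq_one (p q : ℕ) [hp : Fact p.Prime] (hq : q.Prime) (hne : p ≠ q) :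
    ‖((q : ℕ) : ℚ_[p])‖ = 1 := by
  have h1 : ‖((q : ℤ) : ℚ_[p])‖ ≤ 1 := Padic.norm_int_le_one _
  have h2 : ¬ ((p : ℤ) ∣ (q : ℤ)) := by
    rw [Int.natCast_dvd_natCast]
    rw [Nat.prime_dvd_prime_iff_eq hp.out hq]
    exact hne
  have h3 : ¬ ‖((q : ℤ) : ℚ_[p])‖ < 1 := by
    rw [Padic.norm_intCast_lt_one_iff]; exact h2
  have : ‖((q : ℤ) : ℚ_[p])‖ = 1 := le_antisymm h1 (not_lt.1 h3)
  simpa using this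

lemma norm_ratdenom_le_one (p q : ℕ) [hp : Fact p.Prime] (hq : q.Prime) (hne : p ≠ q)
    (a : ℤ) (k : ℕ) : ‖(((a : ℚ) / (q : ℚ) ^ k : ℚ) : ℚ_[p])‖ ≤ 1 := by
  have hq0 : ((q : ℚ)) ≠ 0 := by exact_mod_cast hq.ne_zero
  push_cast
  rw [norm_div, norm_pow, norm_prime_pow_eq_one p q hq hne, one_pow, div_one]
  exact Padic.norm_int_le_one a

lemma zs_simul_approx {s : ℕ} (p : Fin s → ℕ) [hP : ∀ i, Fact (p i).Prime]
    (hpinj : Function.Injective p) (x : ∀ i, ℚ_[p i]) :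
    ∃ r : ℚ, IsZS (∏ i, p i) r ∧ ∀ i, ‖x i - ((r : ℚ) : ℚ_[p i])‖ ≤ 1 := by
  have hp0 : ∀ i, (p i : ℚ) ≠ 0 := fun i => by exact_mod_cast (hP i).out.ne_zero
  have hprod0 : ((∏ i, p i : ℕ) : ℚ) ≠ 0 := by
    push_cast
    exact Finset.prod_ne_zero_iff.2 fun i _ => hp0 i
  choose a k hak using fun j => padic_approx (p j) (x j)
  set f : Fin s → ℚ := fun j => (a j : ℚ) / (p j : ℚ) ^ (k j) with hf
  refine ⟨∑ j, f j, ?_, ?_⟩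
  · refine isZS_sum hprod0 _ _ fun j _ => ?_
    set c : ℕ := ∏ i ∈ Finset.univ.erase j, p i with hc
    have hcsplit : (∏ i, p i) = p j * c := (Finset.mul_prod_erase _ _ (Finset.mem_univ j)).symm
    have hc0 : (c : ℚ) ≠ 0 := by
      rw [hc]; push_cast; exact Finset.prod_ne_zero_iff.2 fun i _ => hp0 i
    refine ⟨a j * (c : ℤ) ^ (k j), k j, ?_⟩
    rw [hf]
    simp only
    rw [hcsplit]
    push_cast
    rw [mul_pow]
    rw [div_eq_div_iff (pow_ne_zero _ (hp0 j)) (mul_ne_zero (pow_ne_zero _ (hp0 j)) (pow_ne_zero _ hc0))]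
    ring
  · intro i
    have hsplit : (∑ j, f j) = f i + ∑ j ∈ Finset.univ.erase i, f j := by
      rw [Finset.add_sum_erase _ _ (Finset.mem_univ i)]
    have hcast : (((∑ j, f j : ℚ)) : ℚ_[p i]) =
        ((f i : ℚ) : ℚ_[p i]) + ∑ j ∈ Finset.univ.erase i, ((f j : ℚ) : ℚ_[p i]) := by
      rw [hsplit]; push_cast; ring
    have hkey : x i - ((∑ j, f j : ℚ) : ℚ_[p i]) =
        (x i - ((f i : ℚ) : ℚ_[p i])) + (- ∑ j ∈ Finset.univ.erase i, ((f j : ℚ) : ℚ_[p i])) := by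
      rw [hcast]; ring
    rw [hkey]
    refine (norm_add_le_max _ _).trans (max_le (hak i) ?_)
    rw [norm_neg]
    refine norm_sum_le_of_forall_le_of_nonneg zero_le_one fun j hj => ?_
    have hji : j ≠ i := Finset.ne_of_mem_erase hj
    exact norm_ratdenom_le_one (p i) (p j) (hP j).out (fun h => hji (hpinj h).symm) (a j) (k j)



lemma fract_floor_close {c : ℝ} (hc : 0 < c) {x y : ℝ} (h : ⌊x * c⌋ = ⌊y * c⌋) :
    |x - y| < c⁻¹ := by
  have h1 : x * c - y * c < 1 := by
    have h2 := Int.lt_floor_add_one (x * c)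
    have h3 := Int.floor_le (y * c)
    rw [h] at h2
    linarith
  have h1' : y * c - x * c < 1 := by
    have h2 := Int.lt_floor_add_one (y * c)
    have h3 := Int.floor_le (x * c)
    rw [← h] at h2
    linarith
  have habs : |x - y| * c < 1 := by
    rcases abs_cases (x - y) with ⟨he, _⟩ | ⟨he, _⟩ <;> rw [he] <;> nlinarith
  calc |x - y| = |x - y| * c * c⁻¹ := by field_simp
    _ < 1 * c⁻¹ := mul_lt_mul_of_pos_right habs (by positivity)
    _ = c⁻¹ := one_mul _

lemma dirichlet_step {m n : ℕ} (hm : 0 < m) (hn : 0 < n) (B : Fin m → Fin n → ℝ)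
    (T : ℕ) (hT : 1 ≤ T) :
    ∃ (q : Fin n → ℤ) (z : Fin m → ℤ), q ≠ 0 ∧ (∀ b, |q b| ≤ (T : ℤ) ^ m) ∧
      ∀ a, |(∑ b, B a b * q b) + z a| < ((T : ℝ) ^ n)⁻¹ := by
  classical
  have hTn : 0 < T ^ n := Nat.pow_pos hT
  have hTnR : (0 : ℝ) < (T : ℝ) ^ n := by positivity
  -- the map into boxes
  set S : (Fin n → ℝ) → Fin m → ℝ := fun v a => ∑ b, B a b * v b with hS
  set g : (Fin n → Fin (T ^ m + 1)) → Fin m → Fin (T ^ n) := fun v a =>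
    ⟨(⌊Int.fract (S (fun b => (v b : ℝ)) a) * (T : ℝ) ^ n⌋).toNat, by
      have hfr0 : 0 ≤ Int.fract (S (fun b => (v b : ℝ)) a) := Int.fract_nonneg _
      have hfr1 : Int.fract (S (fun b => (v b : ℝ)) a) < 1 := Int.fract_lt_one _
      have hlt : ⌊Int.fract (S (fun b => (v b : ℝ)) a) * (T : ℝ) ^ n⌋ < (T ^ n : ℤ) := by
        rw [Int.floor_lt]
        push_cast
        nlinarith
      have hc : ((T ^ n : ℕ) : ℤ) = (T : ℤ) ^ n := by push_cast; ring
      rw [← hc] at hlt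
      omega⟩ with hg
  have hcard : Fintype.card (Fin m → Fin (T ^ n)) <
      Fintype.card (Fin n → Fin (T ^ m + 1)) := by
    simp only [Fintype.card_fun, Fintype.card_fin]
    calc (T ^ n) ^ m = (T ^ m) ^ n := by rw [← pow_mul, ← pow_mul, Nat.mul_comm]
      _ < (T ^ m + 1) ^ n := Nat.pow_lt_pow_left (Nat.lt_succ_self _) hn.ne'
  obtain ⟨v₁, v₂, hne, heq⟩ := Fintype.exists_ne_map_eq_of_card_lt g hcard
  refine ⟨fun b => (v₁ b : ℤ) - (v₂ b : ℤ),
    fun a => ⌊S (fun b => (v₂ b : ℝ)) a⌋ - ⌊S (fun b => (v₁ b : ℝ)) a⌋, ?_, ?_, ?_⟩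
  · intro h0
    apply hne
    funext b
    have := congrFun h0 b
    simp only [Pi.zero_apply, sub_eq_zero] at this
    exact Fin.ext (by exact_mod_cast this)
  · intro b
    have h1 : (v₁ b : ℤ) ≤ T ^ m := by exact_mod_cast Nat.le_of_lt_succ (v₁ b).2
    have h2 : (v₂ b : ℤ) ≤ T ^ m := by exact_mod_cast Nat.le_of_lt_succ (v₂ b).2
    have h3 : ((T ^ m : ℕ) : ℤ) = (T : ℤ) ^ m := by push_cast; ring
    have h4 : (0 : ℤ) ≤ (v₁ b : ℤ) := by positivity
    have h5 : (0 : ℤ) ≤ (v₂ b : ℤ) := by positivity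
    have hbeta : ((fun b => (v₁ b : ℤ) - (v₂ b : ℤ)) b) = (v₁ b : ℤ) - (v₂ b : ℤ) := rfl
    rw [hbeta, abs_le]
    constructor <;> linarith
  · intro a
    set x := S (fun b => (v₁ b : ℝ)) a with hx
    set y := S (fun b => (v₂ b : ℝ)) a with hy
    have hfloor : ⌊Int.fract x * (T : ℝ) ^ n⌋ = ⌊Int.fract y * (T : ℝ) ^ n⌋ := by
      have := congrFun heq a
      rw [hg] at this
      simp only [Fin.mk.injEq] at this
      rw [← hx, ← hy] at this
      have hx0 : 0 ≤ ⌊Int.fract x * (T : ℝ) ^ n⌋ :=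
        Int.floor_nonneg.2 (mul_nonneg (Int.fract_nonneg _) (by positivity))
      have hy0 : 0 ≤ ⌊Int.fract y * (T : ℝ) ^ n⌋ :=
        Int.floor_nonneg.2 (mul_nonneg (Int.fract_nonneg _) (by positivity))
      omega
    have hclose : |Int.fract x - Int.fract y| < ((T : ℝ) ^ n)⁻¹ :=
      fract_floor_close hTnR hfloor
    have hsum : (∑ b, B a b * ((v₁ b : ℤ) - (v₂ b : ℤ) : ℤ)) = x - y := by
      rw [hx, hy, hS]
      simp only
      rw [← Finset.sum_sub_distrib]
      congr 1
      funext b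
      push_cast
      ring
    have hexpr : (∑ b, B a b * ((v₁ b : ℤ) - (v₂ b : ℤ) : ℤ))
        + ((⌊y⌋ - ⌊x⌋ : ℤ) : ℝ) = Int.fract x - Int.fract y := by
      rw [hsum, Int.fract, Int.fract]
      push_cast
      ring
    rw [hexpr]  -- may fail due to cast mismatch
    exact hclose

end Helpers


set_option maxHeartbeats 2000000 in
/-- **Corollary of the S-arithmetic Dirichlet theorem.**
For each finite place `p i ∈ S_f` there is a constant `C i ≥ 1` (and `C_∞ = 1`) such
that for every `A ∈ Mat_{m,n}(ℚ_S)` there are infinitely many pairs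
`(p⃗, q⃗) ∈ ℤ_S^m × ℤ_S^n` satisfying, for all `p ∈ S`,
`‖A_p q⃗ + p⃗‖_p^m ≤ C_p · min {1, ‖q⃗‖_p^{-n}}`. -/

theorem s_arithmetic_dirichlet_corollary
    (m n : ℕ) (hm : 0 < m) (hn : 0 < n)
    (s : ℕ) (p : Fin s → ℕ) [∀ i, Fact (p i).Prime] (hpinj : Function.Injective p) :
    ∃ C : Fin s → ℝ, (∀ i, 1 ≤ C i) ∧
      ∀ (AR : Fin m → Fin n → ℝ) (AP : ∀ i, Fin m → Fin n → ℚ_[p i]),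
        {pq : (Fin m → ℚ) × (Fin n → ℚ) |
          (∀ a, IsZS (∏ i, p i) (pq.1 a)) ∧ (∀ b, IsZS (∏ i, p i) (pq.2 b)) ∧
          ‖fun a => (∑ b, AR a b * (pq.2 b : ℝ)) + (pq.1 a : ℝ)‖ ^ m
            ≤ 1 * min 1 (‖ratR pq.2‖ ^ n)⁻¹ ∧
          ∀ i, ‖fun a => (∑ b, AP i a b * ((pq.2 b : ℚ) : ℚ_[p i])) + ((pq.1 a : ℚ) : ℚ_[p i])‖ ^ m
            ≤ C i * min 1 (‖ratP p i pq.2‖ ^ n)⁻¹}.Infinite := by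
  classical
  have hmne : Nonempty (Fin m) := ⟨⟨0, hm⟩⟩
  refine ⟨fun _ => 1, fun i => le_refl 1, ?_⟩
  intro AR AP
  have hprod0 : ((∏ i, p i : ℕ) : ℚ) ≠ 0 := by
    push_cast
    exact Finset.prod_ne_zero_iff.2 fun i _ => by
      exact_mod_cast (Fact.out : (p i).Prime).ne_zero
  choose R hR1 hR2 using fun (a : Fin m) (b : Fin n) =>
    zs_simul_approx p hpinj (fun i => AP i a b)
  set B : Fin m → Fin n → ℝ := fun a b => AR a b - (R a b : ℝ) with hB
  set Sol : Set ((Fin m → ℚ) × (Fin n → ℚ)) :=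
    {pq : (Fin m → ℚ) × (Fin n → ℚ) |
          (∀ a, IsZS (∏ i, p i) (pq.1 a)) ∧ (∀ b, IsZS (∏ i, p i) (pq.2 b)) ∧
          ‖fun a => (∑ b, AR a b * (pq.2 b : ℝ)) + (pq.1 a : ℝ)‖ ^ m
            ≤ 1 * min 1 (‖ratR pq.2‖ ^ n)⁻¹ ∧
          ∀ i, ‖fun a => (∑ b, AP i a b * ((pq.2 b : ℚ) : ℚ_[p i])) + ((pq.1 a : ℚ) : ℚ_[p i])‖ ^ m
            ≤ (fun _ : Fin s => (1:ℝ)) i * min 1 (‖ratP p i pq.2‖ ^ n)⁻¹} with hSol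
  show Sol.Infinite
  set mk : (Fin n → ℤ) → (Fin m → ℤ) → (Fin m → ℚ) × (Fin n → ℚ) := fun q z =>
    (fun a => (z a : ℚ) - ∑ b, R a b * (q b : ℚ), fun b => ((q b : ℚ))) with hmk
  -- real-place identity
  have hrealeq : ∀ (q : Fin n → ℤ) (z : Fin m → ℤ) (a : Fin m),
      (∑ b, AR a b * (((mk q z).2 b : ℚ) : ℝ)) + (((mk q z).1 a : ℚ) : ℝ)
        = (∑ b, B a b * ((q b : ℤ) : ℝ)) + ((z a : ℤ) : ℝ) := by
    intro q z a
    simp only [hmk, hB]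
    push_cast
    simp only [sub_mul]
    rw [Finset.sum_sub_distrib]
    ring
  -- S-integrality of candidate pairs
  have hZS : ∀ (q : Fin n → ℤ) (z : Fin m → ℤ),
      (∀ a, IsZS (∏ i, p i) ((mk q z).1 a)) ∧ (∀ b, IsZS (∏ i, p i) ((mk q z).2 b)) := by
    intro q z
    constructor
    · intro a
      refine isZS_sub hprod0 (isZS_int _ _) (isZS_sum hprod0 _ _ fun b _ => ?_)
      exact isZS_mul (hR1 a b) (isZS_int _ _)
    · intro b
      exact isZS_int _ _
  have hqnorm : ∀ (q : Fin n → ℤ) (i : Fin s) (b : Fin n),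
      ‖(((q b : ℚ)) : ℚ_[p i])‖ ≤ 1 := by
    intro q i b
    have h : (((q b : ℚ)) : ℚ_[p i]) = ((q b : ℤ) : ℚ_[p i]) := by push_cast; ring
    rw [h]
    exact Padic.norm_int_le_one _
  -- p-adic conditions for candidate pairs
  have hpadic : ∀ (q : Fin n → ℤ) (z : Fin m → ℤ), q ≠ 0 → ∀ i,
      ‖fun a => (∑ b, AP i a b * (((mk q z).2 b : ℚ) : ℚ_[p i]))
          + (((mk q z).1 a : ℚ) : ℚ_[p i])‖ ^ m
        ≤ (fun _ : Fin s => (1:ℝ)) i * min 1 (‖ratP p i (mk q z).2‖ ^ n)⁻¹ := by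
    intro q z hq i
    obtain ⟨b0, hb0⟩ : ∃ b0, q b0 ≠ 0 := by
      by_contra hc
      push_neg at hc
      exact hq (funext fun b => hc b)
    have hle1 : ∀ a, ‖(∑ b, AP i a b * (((mk q z).2 b : ℚ) : ℚ_[p i]))
        + (((mk q z).1 a : ℚ) : ℚ_[p i])‖ ≤ 1 := by
      intro a
      have hexpr : (∑ b, AP i a b * (((mk q z).2 b : ℚ) : ℚ_[p i]))
          + (((mk q z).1 a : ℚ) : ℚ_[p i])
          = (∑ b, (AP i a b - ((R a b : ℚ) : ℚ_[p i])) * (((q b : ℚ)) : ℚ_[p i]))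
            + ((z a : ℤ) : ℚ_[p i]) := by
        simp only [hmk]
        push_cast
        simp only [sub_mul]
        rw [Finset.sum_sub_distrib]
        ring
      rw [hexpr]
      refine (IsUltrametricDist.norm_add_le_max _ _).trans (max_le ?_ (Padic.norm_int_le_one _))
      refine IsUltrametricDist.norm_sum_le_of_forall_le_of_nonneg zero_le_one fun b _ => ?_
      rw [norm_mul]
      exact mul_le_one₀ (hR2 a b i) (norm_nonneg _) (hqnorm q i b)
    have hnorm : ‖fun a => (∑ b, AP i a b * (((mk q z).2 b : ℚ) : ℚ_[p i]))
        + (((mk q z).1 a : ℚ) : ℚ_[p i])‖ ≤ 1 :=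
      (pi_norm_le_iff_of_nonneg zero_le_one).2 hle1
    have hratP1 : ‖ratP p i (mk q z).2‖ ≤ 1 :=
      (pi_norm_le_iff_of_nonneg zero_le_one).2 fun b => hqnorm q i b
    have hratP0 : 0 < ‖ratP p i (mk q z).2‖ := by
      have hc : (ratP p i (mk q z).2) b0 ≠ 0 := by
        simp only [ratP, hmk]
        intro hcontra
        exact hb0 (by exact_mod_cast hcontra)
      calc (0:ℝ) < ‖(ratP p i (mk q z).2) b0‖ := norm_pos_iff.2 hc
        _ ≤ ‖ratP p i (mk q z).2‖ := norm_le_pi_norm _ _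
    have hminP : min 1 (‖ratP p i (mk q z).2‖ ^ n)⁻¹ = 1 := by
      refine min_eq_left ?_
      rw [one_le_inv₀ (by positivity)]
      exact pow_le_one₀ (norm_nonneg _) hratP1
    rw [hminP]
    simpa using pow_le_one₀ (norm_nonneg _) hnorm
  -- general membership criterion
  have hmem : ∀ (q : Fin n → ℤ) (z : Fin m → ℤ), q ≠ 0 →
      ‖fun a => (∑ b, B a b * ((q b : ℤ) : ℝ)) + ((z a : ℤ) : ℝ)‖ ^ m
        ≤ min 1 (‖ratR (mk q z).2‖ ^ n)⁻¹ →
      mk q z ∈ Sol := by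
    intro q z hq hreal
    refine ⟨(hZS q z).1, (hZS q z).2, ?_, hpadic q z hq⟩
    have heq : (fun a => (∑ b, AR a b * (((mk q z).2 b : ℚ) : ℝ)) + (((mk q z).1 a : ℚ) : ℝ))
        = fun a => (∑ b, B a b * ((q b : ℤ) : ℝ)) + ((z a : ℤ) : ℝ) :=
      funext (hrealeq q z)
    rw [heq, one_mul]
    exact hreal
  by_cases hAcase : ∃ q : Fin n → ℤ, q ≠ 0 ∧ ∃ z : Fin m → ℤ,
      ∀ a, (∑ b, B a b * ((q b : ℤ) : ℝ)) + ((z a : ℤ) : ℝ) = 0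
  · obtain ⟨q0, hq0, z0, hz0⟩ := hAcase
    obtain ⟨b0, hb0⟩ : ∃ b0, q0 b0 ≠ 0 := by
      by_contra hc; push_neg at hc; exact hq0 (funext fun b => hc b)
    refine Set.infinite_of_injective_forall_mem
      (f := fun k : ℕ => mk (fun b => ((k : ℤ) + 1) * q0 b) (fun a => ((k : ℤ) + 1) * z0 a)) ?_ ?_
    · intro k1 k2 hk
      have h1 := congrFun (congrArg Prod.snd hk) b0
      simp only [hmk] at h1
      have h2 : ((k1 : ℤ) + 1) * q0 b0 = ((k2 : ℤ) + 1) * q0 b0 := by exact_mod_cast h1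
      have h3 := mul_right_cancel₀ hb0 h2
      omega
    · intro k
      have hqne : (fun b => ((k : ℤ) + 1) * q0 b) ≠ 0 := by
        intro hc
        have h1 := congrFun hc b0
        simp only [Pi.zero_apply, mul_eq_zero] at h1
        rcases h1 with h | h
        · omega
        · exact hb0 h
      refine hmem _ _ hqne ?_
      have hzero : (fun a => (∑ b, B a b * ((((k : ℤ) + 1) * q0 b : ℤ) : ℝ))
          + ((((k : ℤ) + 1) * z0 a : ℤ) : ℝ)) = fun _ : Fin m => (0 : ℝ) := by
        funext a
        have h1 : ∑ b, B a b * ((((k : ℤ) + 1) * q0 b : ℤ) : ℝ)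
            = ((k : ℝ) + 1) * ∑ b, B a b * ((q0 b : ℤ) : ℝ) := by
          rw [Finset.mul_sum]
          refine Finset.sum_congr rfl fun b _ => ?_
          push_cast
          ring
        have h2 : (∑ b, B a b * ((q0 b : ℤ) : ℝ)) = -((z0 a : ℤ) : ℝ) := by
          have := hz0 a; linarith
        rw [h1, h2]
        push_cast
        ring
      rw [hzero]
      have hz' : ‖fun _ : Fin m => (0:ℝ)‖ = 0 := by
        have : (fun _ : Fin m => (0:ℝ)) = (0 : Fin m → ℝ) := rfl
        rw [this, norm_zero]
      rw [hz', zero_pow hm.ne']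
      positivity
  · push_neg at hAcase
    by_contra hfin
    rw [Set.not_infinite] at hfin
    set val : (Fin m → ℚ) × (Fin n → ℚ) → ℝ := fun e =>
      ‖fun a => (∑ b, AR a b * ((e.2 b : ℚ) : ℝ)) + ((e.1 a : ℚ) : ℝ)‖ with hval
    have hstep : ∀ T : ℕ, 1 ≤ T → ∃ e ∈ Sol, 0 < val e ∧ val e < ((T : ℝ) ^ n)⁻¹ := by
      intro T hT
      have hTR : (1 : ℝ) ≤ (T : ℝ) := by exact_mod_cast hT
      obtain ⟨q, z, hq, hqb, hqz⟩ := dirichlet_step hm hn B T hT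
      obtain ⟨b0, hb0⟩ : ∃ b0, q b0 ≠ 0 := by
        by_contra hc; push_neg at hc; exact hq (funext fun b => hc b)
      have hTn1 : (1:ℝ) ≤ (T : ℝ) ^ n := one_le_pow₀ hTR
      have hfnorm : ‖fun a => (∑ b, B a b * ((q b : ℤ) : ℝ)) + ((z a : ℤ) : ℝ)‖
          < ((T : ℝ) ^ n)⁻¹ := by
        rw [pi_norm_lt_iff (by positivity)]
        intro a
        rw [Real.norm_eq_abs]
        exact hqz a
      have hratR1 : ‖ratR (mk q z).2‖ ≤ (T : ℝ) ^ m := by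
        refine (pi_norm_le_iff_of_nonneg (by positivity)).2 fun b => ?_
        simp only [ratR, hmk]
        rw [Real.norm_eq_abs]
        have : |((q b : ℚ) : ℝ)| = ((|q b| : ℤ) : ℝ) := by push_cast; simp [abs]
        calc |((q b : ℚ) : ℝ)| = ((|q b| : ℤ) : ℝ) := this
          _ ≤ (((T : ℤ) ^ m : ℤ) : ℝ) := by exact_mod_cast hqb b
          _ = (T : ℝ) ^ m := by push_cast; ring
      have hratR0 : 0 < ‖ratR (mk q z).2‖ := by
        have hc : (ratR (mk q z).2) b0 ≠ 0 := by
          simp only [ratR, hmk]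
          intro hcontra
          exact hb0 (by exact_mod_cast hcontra)
        calc (0:ℝ) < ‖(ratR (mk q z).2) b0‖ := norm_pos_iff.2 hc
          _ ≤ ‖ratR (mk q z).2‖ := norm_le_pi_norm _ _
      have hbound : (((T : ℝ) ^ n)⁻¹) ^ m ≤ min 1 (‖ratR (mk q z).2‖ ^ n)⁻¹ := by
        refine le_min ?_ ?_
        · exact pow_le_one₀ (by positivity) (inv_le_one_of_one_le₀ hTn1)
        · rw [inv_pow, ← pow_mul]
          have h1 : ‖ratR (mk q z).2‖ ^ n ≤ (T : ℝ) ^ (n * m) := by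
            calc ‖ratR (mk q z).2‖ ^ n ≤ ((T : ℝ) ^ m) ^ n :=
                  pow_le_pow_left₀ (norm_nonneg _) hratR1 n
              _ = (T : ℝ) ^ (n * m) := by rw [← pow_mul, Nat.mul_comm]
          exact inv_anti₀ (by positivity) h1
      refine ⟨mk q z, hmem q z hq ?_, ?_, ?_⟩
      · calc ‖fun a => (∑ b, B a b * ((q b : ℤ) : ℝ)) + ((z a : ℤ) : ℝ)‖ ^ m
            ≤ (((T : ℝ) ^ n)⁻¹) ^ m :=
              pow_le_pow_left₀ (norm_nonneg _) hfnorm.le m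
          _ ≤ min 1 (‖ratR (mk q z).2‖ ^ n)⁻¹ := hbound
      · -- positivity of val
        have heq : val (mk q z)
            = ‖fun a => (∑ b, B a b * ((q b : ℤ) : ℝ)) + ((z a : ℤ) : ℝ)‖ := by
          simp only [hval]
          congr 1
          exact funext (hrealeq q z)
        rw [heq]
        obtain ⟨a0, ha0⟩ := hAcase q hq z
        have : (fun a => (∑ b, B a b * ((q b : ℤ) : ℝ)) + ((z a : ℤ) : ℝ)) ≠ 0 := by
          intro hc
          exact ha0 (congrFun hc a0)
        exact norm_pos_iff.2 this
      · have heq : val (mk q z)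
            = ‖fun a => (∑ b, B a b * ((q b : ℤ) : ℝ)) + ((z a : ℤ) : ℝ)‖ := by
          simp only [hval]
          congr 1
          exact funext (hrealeq q z)
        rw [heq]
        exact hfnorm
    set Fs : Finset ((Fin m → ℚ) × (Fin n → ℚ)) :=
      hfin.toFinset.filter (fun e => 0 < val e) with hFs
    have hFsne : Fs.Nonempty := by
      obtain ⟨e, he, hpos, _⟩ := hstep 1 le_rfl
      exact ⟨e, by simp [hFs, Set.Finite.mem_toFinset, he, hpos]⟩
    obtain ⟨e0, he0, hmin⟩ := Finset.exists_min_image Fs val hFsne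
    have heps : 0 < val e0 := by
      have := he0
      rw [hFs, Finset.mem_filter] at this
      exact this.2
    obtain ⟨T, hTgt⟩ := exists_nat_gt (max 1 (val e0)⁻¹)
    have hT1 : 1 ≤ T := by
      have h1 : (1 : ℝ) < T := lt_of_le_of_lt (le_max_left _ _) hTgt
      exact_mod_cast h1.le
    obtain ⟨e, he, hpos, hlt⟩ := hstep T hT1
    have heFs : e ∈ Fs := by
      rw [hFs, Finset.mem_filter, Set.Finite.mem_toFinset]
      exact ⟨he, hpos⟩
    have h1 : (val e0)⁻¹ < (T : ℝ) ^ n :=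
      lt_of_lt_of_le (lt_of_le_of_lt (le_max_right _ _) hTgt)
        (le_self_pow₀ (by exact_mod_cast hT1) hn.ne')
    have h2 : ((T : ℝ) ^ n)⁻¹ < val e0 := by
      rw [← inv_inv (val e0)]
      exact inv_strictAnti₀ (by positivity) h1
    have h3 := hmin e heFs
    linarith
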